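/- arXiv:1710.05508 — 2 statements merged into one kernel-verified Lean document; each statement's English description precedes it below -/
import Mathlib

section
/- Let $q \ge 2$, $\theta > 0$, $\sigma \in (0, 1/2)$, $R > 0$, $\kappa \in (0,1)$. For $(x,t) \in \mathbb{R}^d \times [0, \theta R^2]$ define $\psi_0(t) = \sigma^2 R^2 + \frac{1-\sigma^2}{\theta} t$, $\psi_1(x,t) = (\psi_0(t) - |x|^2)^+$, $\xi = \psi_1/\psi_0$, and suppose coefficients $a_i \in [\kappa, 1/\kappa]$. Then on the set $\{\psi_1 > 0\}$, for $q \ge q_0(\kappa, \theta)$ sufficiently large, $\sum_{i=1}^d a_i \cdot 4(2x_i^2 - \psi_1)\psi_0^{-q} - \partial_t(\psi_1^2 \psi_0^{-q}) \ge \left(\kappa + \frac{q}{2\theta}\xi^2\right)\psi_0^{1-q}$. -/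
set_option maxHeartbeats 1000000

open Set

/-- key differential inequality for the barrier `ψ = ψ₁² ψ₀^{-q}`. -/
theorem stmt11 (d : ℕ) (κ θ : ℝ) (hκ : κ ∈ Set.Ioo (0 : ℝ) 1) (hθ : 0 < θ) :
    ∃ q0 : ℝ, ∀ q : ℝ, q0 ≤ q → 2 ≤ q →
      ∀ σ R : ℝ, σ ∈ Set.Ioo (0 : ℝ) (1 / 2) → 0 < R →
      ∀ a : Fin d → ℝ, (∀ i, a i ∈ Set.Icc κ κ⁻¹) →
      ∀ x : Fin d → ℝ, ∀ t ∈ Set.Icc (0 : ℝ) (θ * R ^ 2),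
      let ψ0 : ℝ → ℝ := fun s => σ ^ 2 * R ^ 2 + (1 - σ ^ 2) / θ * s
      let ψ1 : ℝ → ℝ := fun s => max (ψ0 s - ∑ i, (x i) ^ 2) 0
      0 < ψ1 t →
      (∑ i, a i * (4 * (2 * (x i) ^ 2 - ψ1 t))) * ψ0 t ^ (-q)
          - deriv (fun s => ψ1 s ^ 2 * ψ0 s ^ (-q)) t
        ≥ (κ + q / (2 * θ) * (ψ1 t / ψ0 t) ^ 2) * ψ0 t ^ (1 - q) := by
  obtain ⟨hκ0, hκ1⟩ := hκ
  refine ⟨max 2 (θ * (8 * κ + 4 * d * κ⁻¹ + 2 * θ⁻¹) ^ 2 / (7 * κ)), ?_⟩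
  intro q hq0 hq2 σ R hσ hR a ha x t ht ψ0 ψ1 hpos
  obtain ⟨hσ0, hσ12⟩ := hσ
  set B : ℝ := 8 * κ + 4 * d * κ⁻¹ + 2 * θ⁻¹ with hBdef
  set S : ℝ := ∑ i, (x i) ^ 2 with hSdef
  have hS0 : 0 ≤ S := Finset.sum_nonneg fun i _ => sq_nonneg _
  set c : ℝ := (1 - σ ^ 2) / θ with hcdef
  have hσ2 : σ ^ 2 < 1 / 4 := by nlinarith
  have hc0 : 0 < c := by
    apply div_pos ?_ hθ
    nlinarith
  have hP : 0 < ψ0 t := by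
    have h2 : 0 ≤ c * t := mul_nonneg hc0.le ht.1
    have h3 : 0 < σ ^ 2 * R ^ 2 := by positivity
    show 0 < σ ^ 2 * R ^ 2 + c * t
    linarith
  set P : ℝ := ψ0 t with hPdef
  have h1 : 0 < P - S := by
    have h := hpos
    simp only [ψ1, lt_max_iff, lt_irrefl, or_false] at h
    exact h
  have hu : ψ1 t = P - S := by
    show max (P - S) 0 = P - S
    exact max_eq_left h1.le
  -- derivative computation
  have h0 : HasDerivAt ψ0 c t := by
    have := ((hasDerivAt_id t).const_mul c).const_add (σ ^ 2 * R ^ 2)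
    rw [mul_one] at this
    exact this
  have hsq : HasDerivAt (fun s => (ψ0 s - S) ^ 2) (2 * (P - S) * c) t := by
    have := (h0.sub_const S).fun_pow 2
    simpa [hPdef] using this
  have hrp : HasDerivAt (fun s => ψ0 s ^ (-q)) (c * (-q) * P ^ (-q - 1)) t :=
    h0.rpow_const (Or.inl hP.ne')
  have hprod : HasDerivAt (fun s => (ψ0 s - S) ^ 2 * ψ0 s ^ (-q))
      (2 * (P - S) * c * P ^ (-q) + (P - S) ^ 2 * (c * (-q) * P ^ (-q - 1))) t := by
    simpa [hPdef] using hsq.fun_mul hrp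
  have hev : (fun s => ψ1 s ^ 2 * ψ0 s ^ (-q)) =ᶠ[nhds t]
      (fun s => (ψ0 s - S) ^ 2 * ψ0 s ^ (-q)) := by
    have hcont : ContinuousAt (fun s => ψ0 s - S) t := by fun_prop
    have hev0 : ∀ᶠ s in nhds t, 0 < ψ0 s - S := hcont.eventually (eventually_gt_nhds h1)
    filter_upwards [hev0] with s hs
    show max (ψ0 s - S) 0 ^ 2 * ψ0 s ^ (-q) = (ψ0 s - S) ^ 2 * ψ0 s ^ (-q)
    rw [max_eq_left hs.le]
  have hderiv : deriv (fun s => ψ1 s ^ 2 * ψ0 s ^ (-q)) t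
      = 2 * (P - S) * c * P ^ (-q) + (P - S) ^ 2 * (c * (-q) * P ^ (-q - 1)) := by
    rw [hev.deriv_eq, hprod.deriv]
  rw [hderiv, hu]
  -- rpow identities
  have e0 : P ^ (-q) = P * P ^ (-q - 1) := by
    conv_lhs => rw [show -q = 1 + (-q - 1) by ring]
    rw [Real.rpow_add hP, Real.rpow_one]
  have e1 : P ^ (1 - q) = P ^ (2 : ℕ) * P ^ (-q - 1) := by
    rw [← Real.rpow_natCast P 2, ← Real.rpow_add hP]
    congr 1
    ring
  have hr : 0 < P ^ (-q - 1) := Real.rpow_pos_of_pos hP _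
  set r : ℝ := P ^ (-q - 1) with hrdef
  set u : ℝ := P - S with hudef
  rw [e0, e1]
  -- everything is now opaque; clear definitional bodies
  clear_value B S c P r u
  clear hderiv hprod hrp hsq h0 hev hpos hu hrdef e0 e1
  have hceq : c = (1 - σ ^ 2) * θ⁻¹ := by rw [hcdef]; exact div_eq_mul_inv _ _
  clear hPdef hcdef
  clear ψ1 ψ0
  have hT : θ * θ⁻¹ = 1 := mul_inv_cancel₀ hθ.ne'
  have hKK : κ * κ⁻¹ = 1 := mul_inv_cancel₀ hκ0.ne'
  have hK0 : 0 < κ⁻¹ := inv_pos.mpr hκ0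
  have hT0 : 0 < θ⁻¹ := inv_pos.mpr hθ
  have hc1 : 3 / 4 * θ⁻¹ ≤ c := by rw [hceq]; nlinarith
  have hc2 : c ≤ θ⁻¹ := by rw [hceq]; nlinarith [sq_nonneg σ]
  -- bound on q
  have hqB : θ * B ^ 2 / (7 * κ) ≤ q := by
    exact le_trans (le_max_right _ _) hq0
  have hqB' : θ * B ^ 2 ≤ q * (7 * κ) := by
    rw [div_le_iff₀ (by positivity)] at hqB; exact hqB
  have hq : B ^ 2 ≤ 7 * κ * (q * θ⁻¹) := by
    nlinarith [mul_le_mul_of_nonneg_left hqB' hT0.le]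
  have hq2' : (0:ℝ) ≤ q := by linarith
  -- sum bound
  have hA : 8 * κ * S - 4 * d * κ⁻¹ * u ≤ ∑ i, a i * (4 * (2 * (x i) ^ 2 - u)) := by
    have hterm : ∀ i ∈ Finset.univ, 8 * κ * (x i) ^ 2 - 4 * κ⁻¹ * u
        ≤ a i * (4 * (2 * (x i) ^ 2 - u)) := by
      intro i _
      obtain ⟨hai1, hai2⟩ := ha i
      nlinarith [sq_nonneg (x i), h1]
    calc 8 * κ * S - 4 * d * κ⁻¹ * u
        = ∑ i : Fin d, (8 * κ * (x i) ^ 2 - 4 * κ⁻¹ * u) := by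
          rw [Finset.sum_sub_distrib, ← Finset.mul_sum, Finset.sum_const, Finset.card_univ,
            Fintype.card_fin, nsmul_eq_mul, ← hSdef]
          ring
      _ ≤ _ := Finset.sum_le_sum hterm
  -- key quadratic inequality
  have h5 : 0 ≤ (7 * κ * (q * θ⁻¹) - B ^ 2) * u ^ 2 :=
    mul_nonneg (by linarith) (sq_nonneg u)
  have quad : 0 ≤ 7 * κ * P ^ 2 - B * u * P + q * θ⁻¹ / 4 * u ^ 2 := by
    nlinarith [sq_nonneg (14 * κ * P - B * u), h5, hκ0]
  rw [hBdef] at quad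
  have key2 : κ * P ^ 2 + q * θ⁻¹ / 2 * u ^ 2 + 2 * u * c * P - q * c * u ^ 2
      ≤ (∑ i, a i * (4 * (2 * (x i) ^ 2 - u))) * P := by
    have hAP : (8 * κ * S - 4 * d * κ⁻¹ * u) * P
        ≤ (∑ i, a i * (4 * (2 * (x i) ^ 2 - u))) * P :=
      mul_le_mul_of_nonneg_right hA hP.le
    have hcu : q * (3 / 4 * θ⁻¹) * u ^ 2 ≤ q * c * u ^ 2 := by
      have := mul_le_mul_of_nonneg_left hc1 hq2'
      nlinarith [sq_nonneg u]
    have hucP : 2 * u * c * P ≤ 2 * u * θ⁻¹ * P := by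
      nlinarith [mul_pos h1 hP]
    have hSP : S = P - u := by rw [hudef]; ring
    rw [hSP] at hAP
    nlinarith [hAP, quad, hcu, hucP]
  -- conclude
  have expand : (κ + q / (2 * θ) * (u / P) ^ 2) * (P ^ (2 : ℕ) * r)
      = (κ * P ^ 2 + q * θ⁻¹ / 2 * u ^ 2) * r := by
    field_simp
  rw [ge_iff_le, expand]
  nlinarith [mul_le_mul_of_nonneg_right key2 hr.le]
end

section
/- Let $\mathcal{G}$ be a countable collection of pairwise disjoint half-open intervals in $\mathbb{R}$, and for each interval $I = (t - r^2, t) \in \mathcal{G}$ (with right endpoint $t$ and length $r^2$) define $I^* = (t, t + 4r^2/\eta)$ and $I^{-1} \subset (t - 4r^2, t + 3r^2)$, where $\eta \in (0, 3/4)$. Suppose the union $\bigcup_{I\in\mathcal{G}} I^*$ equals a single interval $(t_m, \tau_m)$. Then $\bigcup_{I\in\mathcal{G}} I^{-1} \subset \big(t_m - \eta(\tau_m - t_m),\ \tau_m\big)$, and consequently the Lebesgue measure satisfies $\big|\bigcup_{I\in\mathcal{G}} I^{-1}\big| \le (1+\eta)\big|\bigcup_{I\in\mathcal{G}} I^*\big|$.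 -/
open Set MeasureTheory
open scoped ENNReal

/-- one-dimensional covering estimate in the parabolic
Calderón–Zygmund decomposition. -/
theorem stmt17 {ι : Type*} [Countable ι] (η : ℝ) (hη : η ∈ Set.Ioo (0 : ℝ) (3 / 4))
    (t r : ι → ℝ) (hr : ∀ i, 0 < r i)
    (hdisj : Pairwise (Function.onFun Disjoint fun i => Set.Ioc (t i - r i ^ 2) (t i)))
    (Iinv : ι → Set ℝ)
    (hIinv : ∀ i, Iinv i ⊆ Set.Ioo (t i - 4 * r i ^ 2) (t i + 3 * r i ^ 2))
    (tm τm : ℝ)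
    (hunion : (⋃ i, Set.Ioo (t i) (t i + 4 * r i ^ 2 / η)) = Set.Ioo tm τm) :
    (⋃ i, Iinv i) ⊆ Set.Ioo (tm - η * (τm - tm)) τm ∧
      volume (⋃ i, Iinv i)
        ≤ ENNReal.ofReal (1 + η) * volume (⋃ i, Set.Ioo (t i) (t i + 4 * r i ^ 2 / η)) := by
  obtain ⟨hη0, hη34⟩ := hη
  have key : ∀ i, tm ≤ t i ∧ t i + 4 * r i ^ 2 / η ≤ τm := by
    intro i
    have hpos : 0 < 4 * r i ^ 2 / η := by
      have := hr i; positivity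
    have hlt : t i < t i + 4 * r i ^ 2 / η := by linarith
    have hs : Set.Ioo (t i) (t i + 4 * r i ^ 2 / η) ⊆ Set.Ioo tm τm := by
      rw [← hunion]; exact Set.subset_iUnion (fun i => Set.Ioo (t i) (t i + 4 * r i ^ 2 / η)) i
    exact (Set.Ioo_subset_Ioo_iff hlt).1 hs
  have hsub : (⋃ i, Iinv i) ⊆ Set.Ioo (tm - η * (τm - tm)) τm := by
    intro x hx
    obtain ⟨i, hxi⟩ := Set.mem_iUnion.1 hx
    obtain ⟨hx1, hx2⟩ := hIinv i hxi
    obtain ⟨h1, h2⟩ := key i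
    have hrpos : (0:ℝ) < r i ^ 2 := by have := hr i; positivity
    have hd : 4 * r i ^ 2 / η ≤ τm - tm := by linarith
    have h4 : 4 * r i ^ 2 ≤ η * (τm - tm) := by
      have := (div_le_iff₀ hη0).1 (by linarith : 4 * r i ^ 2 / η ≤ τm - tm)
      linarith [this]
    have h3 : 3 * r i ^ 2 < 4 * r i ^ 2 / η := by
      rw [lt_div_iff₀ hη0]; nlinarith
    constructor
    · linarith
    · linarith
  refine ⟨hsub, ?_⟩
  calc volume (⋃ i, Iinv i) ≤ volume (Set.Ioo (tm - η * (τm - tm)) τm) :=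
        measure_mono hsub
    _ = ENNReal.ofReal (τm - (tm - η * (τm - tm))) := Real.volume_Ioo
    _ = ENNReal.ofReal ((1 + η) * (τm - tm)) := by ring_nf
    _ = ENNReal.ofReal (1 + η) * ENNReal.ofReal (τm - tm) :=
        ENNReal.ofReal_mul (by linarith)
    _ = ENNReal.ofReal (1 + η) * volume (⋃ i, Set.Ioo (t i) (t i + 4 * r i ^ 2 / η)) := by
        rw [hunion, Real.volume_Ioo]
end
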